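/- If t ∈ ℕ, m ≥ 3, and t > max{ ln(ε/(4(m−2))) / (2·ln((m−2)/(m−1))), ln((2−ε)/4) / ln(1 − 1/(m−1)²) } for some ε ∈ (0,2), then τ(K_{2,l}) > m whenever l ≥ 4t. -/

import Mathlib

/-- A proper coloring of the graph `G` from the list assignment `L` (colors are
natural numbers): every vertex gets a color from its list, and adjacent vertices
get different colors. -/
def IsProperListColoring {V : Type*} (G : SimpleGraph V) (L : V → Finset ℕ) (f : V → ℕ) : Prop :=
  (∀ v, f v ∈ L v) ∧ ∀ ⦃u w⦄, G.Adj u w → f u ≠ f w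

/-- `P(G, L)`: the number of proper `L`-colorings of `G`. -/
noncomputable def numListColorings {V : Type*} (G : SimpleGraph V) (L : V → Finset ℕ) : ℕ :=
  {f : V → ℕ | IsProperListColoring G L f}.ncard

/-- `P(G, m)`: the chromatic polynomial of `G` evaluated at `m`, i.e. the number of
proper colorings of `G` using colors from `{1, …, m}`. -/
noncomputable def chromPoly {V : Type*} (G : SimpleGraph V) (m : ℕ) : ℕ :=
  numListColorings G fun _ => Finset.Icc 1 m

/-- `L` is an `m`-assignment: every list has size `m`. -/
def IsAssignment {V : Type*} (L : V → Finset ℕ) (m : ℕ) : Prop :=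
  ∀ v, (L v).card = m

/-- `P_ℓ(G, m)`: the list color function, the minimum of `P(G, L)` over all
`m`-assignments `L` for `G`. -/
noncomputable def listColorFunction {V : Type*} (G : SimpleGraph V) (m : ℕ) : ℕ :=
  sInf {p | ∃ L : V → Finset ℕ, IsAssignment L m ∧ numListColorings G L = p}

/-- `χ(G)`: the chromatic number, the least `m` admitting a proper coloring with
colors from `{1, …, m}`. -/
noncomputable def chromNum {V : Type*} (G : SimpleGraph V) : ℕ :=
  sInf {m | 0 < chromPoly G m}

/-- `χ_ℓ(G)`: the list chromatic number, the least `k` such that `G` has a proper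
`L`-coloring for every `k`-assignment `L`. -/
noncomputable def listChromNum {V : Type*} (G : SimpleGraph V) : ℕ :=
  sInf {k | ∀ L : V → Finset ℕ, IsAssignment L k → ∃ f, IsProperListColoring G L f}

/-- `τ(G)`: the list color function threshold, the least `k ≥ χ(G)` such that
`P_ℓ(G, m) = P(G, m)` whenever `m ≥ k`. -/
noncomputable def lcfThreshold {V : Type*} (G : SimpleGraph V) : ℕ :=
  sInf {k | chromNum G ≤ k ∧ ∀ m, k ≤ m → listColorFunction G m = chromPoly G m}

/-- The complete bipartite graph `K_{2,l}`. -/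
def K2l (l : ℕ) : SimpleGraph (Fin 2 ⊕ Fin l) := completeBipartiteGraph (Fin 2) (Fin l)

open Finset

def colorings (l : ℕ) (L : Fin 2 ⊕ Fin l → Finset ℕ) : Finset ((Fin 2 ⊕ Fin l) → ℕ) :=
  (Fintype.piFinset L).filter
    (fun f => ∀ j : Fin l, f (Sum.inr j) ≠ f (Sum.inl 0) ∧ f (Sum.inr j) ≠ f (Sum.inl 1))

lemma coloring_set_eq (l : ℕ) (L : Fin 2 ⊕ Fin l → Finset ℕ) :
    {f | IsProperListColoring (K2l l) L f} = ↑(colorings l L) := by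
  ext f
  simp only [Set.mem_setOf_eq, colorings, coe_filter, mem_coe,
    Fintype.mem_piFinset, Set.mem_setOf_eq, IsProperListColoring]
  constructor
  · rintro ⟨hmem, hadj⟩
    refine ⟨hmem, fun j => ⟨?_, ?_⟩⟩
    · exact Ne.symm (hadj (show (K2l l).Adj (Sum.inl 0) (Sum.inr j) by simp [K2l]))
    · exact Ne.symm (hadj (show (K2l l).Adj (Sum.inl 1) (Sum.inr j) by simp [K2l]))
  · rintro ⟨hmem, hne⟩
    refine ⟨hmem, ?_⟩
    rintro (i | j) (i' | j') hadj
    · simp [K2l] at hadj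
    · fin_cases i
      · exact Ne.symm (hne j').1
      · exact Ne.symm (hne j').2
    · fin_cases i'
      · exact (hne j).1
      · exact (hne j).2
    · simp [K2l] at hadj

lemma numListColorings_eq_card (l : ℕ) (L : Fin 2 ⊕ Fin l → Finset ℕ) :
    numListColorings (K2l l) L = (colorings l L).card := by
  rw [numListColorings, coloring_set_eq, Set.ncard_coe_finset]

lemma colorings_card (l : ℕ) (L : Fin 2 ⊕ Fin l → Finset ℕ) :
    (colorings l L).card
      = ∑ c1 ∈ L (Sum.inl 0), ∑ c2 ∈ L (Sum.inl 1),
          ∏ j : Fin l, ((L (Sum.inr j)) \ {c1, c2}).card := by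
  classical
  rw [Finset.card_eq_sum_card_fiberwise
    (f := fun f => (f (Sum.inl 0), f (Sum.inl 1)))
    (t := (L (Sum.inl 0)) ×ˢ (L (Sum.inl 1)))
    (fun f hf => by
      simp only [colorings, Finset.mem_coe, Finset.mem_filter, Fintype.mem_piFinset] at hf
      exact Finset.mem_product.2 ⟨hf.1 (Sum.inl 0), hf.1 (Sum.inl 1)⟩)]
  rw [Finset.sum_product]
  refine Finset.sum_congr rfl fun c1 hc1 => Finset.sum_congr rfl fun c2 hc2 => ?_
  rw [← Fintype.card_piFinset]
  refine Finset.card_bij' (fun f _ => fun j => f (Sum.inr j))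
    (fun h _ => Sum.elim ![c1, c2] h) ?_ ?_ ?_ ?_
  · intro f hf
    simp only [Finset.mem_filter, colorings, Fintype.mem_piFinset, Prod.mk.injEq] at hf
    obtain ⟨⟨hmem, hne⟩, hp1, hp2⟩ := hf
    rw [Fintype.mem_piFinset]
    intro j
    rw [Finset.mem_sdiff]
    refine ⟨hmem _, ?_⟩
    simp only [Finset.mem_insert, Finset.mem_singleton]
    push_neg
    exact ⟨hp1 ▸ (hne j).1, hp2 ▸ (hne j).2⟩
  · intro h hh
    rw [Fintype.mem_piFinset] at hh
    simp only [Finset.mem_filter, colorings, Fintype.mem_piFinset, Prod.mk.injEq]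
    refine ⟨⟨?_, fun j => ?_⟩, ?_, ?_⟩
    · rintro (i | j)
      · fin_cases i
        · simpa using hc1
        · simpa using hc2
      · exact (Finset.mem_sdiff.1 (hh j)).1
    · have := (Finset.mem_sdiff.1 (hh j)).2
      simp only [Finset.mem_insert, Finset.mem_singleton] at this
      push_neg at this
      simpa using this
    · simp
    · simp
  · intro f hf
    simp only [Finset.mem_filter, colorings, Prod.mk.injEq] at hf
    obtain ⟨-, hp1, hp2⟩ := hf
    funext v
    rcases v with i | j
    · fin_cases i
      · simpa using hp1.symm
      · simpa using hp2.symm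
    · rfl
  · intro h hh
    rfl

section helpers
variable {T : Finset ℕ} {c1 c2 : ℕ}

lemma pair_self (c : ℕ) : ({c, c} : Finset ℕ) = {c} := by
  simp

lemma card_sdiff_mm (h1 : c1 ∈ T) (h2 : c2 ∈ T) (hne : c1 ≠ c2) :
    (T \ {c1, c2}).card = T.card - 2 := by
  rw [card_sdiff_of_subset (by simp [Finset.insert_subset_iff, h1, h2]), Finset.card_pair hne]

lemma sdiff_pair_right_not_mem (h2 : c2 ∉ T) : T \ {c1, c2} = T \ {c1} := by
  ext x; simp only [mem_sdiff, mem_insert, mem_singleton]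
  constructor
  · tauto
  · rintro ⟨hx, hne⟩; exact ⟨hx, by rintro (rfl | rfl) <;> [exact hne rfl; exact h2 hx]⟩

lemma sdiff_pair_left_not_mem (h1 : c1 ∉ T) : T \ {c1, c2} = T \ {c2} := by
  ext x; simp only [mem_sdiff, mem_insert, mem_singleton]
  constructor
  · tauto
  · rintro ⟨hx, hne⟩; exact ⟨hx, by rintro (rfl | rfl) <;> [exact h1 hx; exact hne rfl]⟩

lemma card_sdiff_single (h1 : c1 ∈ T) : (T \ {c1}).card = T.card - 1 := by
  rw [card_sdiff_of_subset (by simpa using h1), Finset.card_singleton]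

lemma card_sdiff_mn (h1 : c1 ∈ T) (h2 : c2 ∉ T) :
    (T \ {c1, c2}).card = T.card - 1 := by
  rw [sdiff_pair_right_not_mem h2, card_sdiff_single h1]

lemma card_sdiff_nm (h1 : c1 ∉ T) (h2 : c2 ∈ T) :
    (T \ {c1, c2}).card = T.card - 1 := by
  rw [sdiff_pair_left_not_mem h1, card_sdiff_single h2]

lemma card_sdiff_nn (h1 : c1 ∉ T) (h2 : c2 ∉ T) :
    (T \ {c1, c2}).card = T.card := by
  rw [sdiff_pair_left_not_mem h1, Finset.sdiff_eq_self_of_disjoint (by simpa using h2)]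

/-- split a sum into the value at `c1` (if present) plus the sum over `erase`. -/
lemma sum_split_erase (B : Finset ℕ) (g : ℕ → ℕ) (c1 : ℕ) :
    ∑ c2 ∈ B, g c2 = (if c1 ∈ B then g c1 else 0) + ∑ c2 ∈ B.erase c1, g c2 := by
  by_cases h : c1 ∈ B
  · rw [if_pos h, Finset.add_sum_erase _ _ h]
  · rw [if_neg h, Finset.erase_eq_of_notMem h, zero_add]

lemma aux_pow (a : ℕ) : ∀ n, 2*n ≤ a → (a+1)^n * a ≤ a^n * (a + 2*n)
  | 0, _ => by simp
  | n+1, h => by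
    have ih := aux_pow a n (by omega)
    have h2 : (a+1)^(n+1) * a = (a+1) * ((a+1)^n * a) := by ring
    rw [h2]
    calc (a+1) * ((a+1)^n * a) ≤ (a+1) * (a^n * (a + 2*n)) :=
          Nat.mul_le_mul_left _ ih
      _ ≤ a^(n+1) * (a + 2*(n+1)) := by
          have : (a+1) * (a + 2*n) ≤ a * (a + 2*(n+1)) := by nlinarith
          calc (a+1) * (a^n * (a + 2*n)) = a^n * ((a+1) * (a + 2*n)) := by ring
            _ ≤ a^n * (a * (a + 2*(n+1))) := Nat.mul_le_mul_left _ this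
            _ = a^(n+1) * (a + 2*(n+1)) := by ring

lemma pow_succ_le_two_pow {a n : ℕ} (h : 2*n ≤ a) : (a+1)^n ≤ 2 * a^n := by
  rcases Nat.eq_zero_or_pos n with rfl | hn
  · simp
  · have ha : 0 < a := by omega
    have := (aux_pow a n h).trans (Nat.mul_le_mul_left (a^n) (show a + 2*n ≤ 2*a by omega))
    have h2 : a^n * (2*a) = (2 * a^n) * a := by ring
    rw [h2] at this
    exact Nat.le_of_mul_le_mul_right this ha

lemma prod_add_ge {ι : Type*} [DecidableEq ι] (s : Finset ι) (hs : s.Nonempty) (a : ℕ) (e : ι → ℕ) :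
    a ^ s.card + a ^ (s.card - 1) * ∑ j ∈ s, e j ≤ ∏ j ∈ s, (a + e j) := by
  induction hs using Finset.Nonempty.cons_induction with
  | singleton i => simp
  | cons i s hi hne ih =>
    rw [Finset.prod_cons, Finset.sum_cons, Finset.card_cons]
    have hn : 1 ≤ s.card := hne.card_pos
    set n := s.card with hndef
    have hx : a^(n-1) * a = a^n := by
      rw [← pow_succ]; congr 1; omega
    have hsub : n + 1 - 1 = n := by omega
    have hexp : (a + e i) * (a^n + a^(n-1) * ∑ j ∈ s, e j)
        = (a*a^n + a^n * ∑ j ∈ s, e j + a^n * e i) + e i * (a^(n-1) * ∑ j ∈ s, e j) := by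
      rw [← hx]; ring
    calc a^(n+1) + a^(n+1-1) * (e i + ∑ j ∈ s, e j)
        = a*a^n + a^n * ∑ j ∈ s, e j + a^n * e i := by
          rw [hsub, pow_succ]; ring
      _ ≤ (a + e i) * (a^n + a^(n-1) * ∑ j ∈ s, e j) := by
          rw [hexp]; exact Nat.le_add_right _ _
      _ ≤ (a + e i) * ∏ j ∈ s, (a + e j) := Nat.mul_le_mul_left _ ih

end helpers
lemma double_sum_split (A B : Finset ℕ) (f : ℕ → ℕ → ℕ) :
    ∑ c1 ∈ A, ∑ c2 ∈ B, f c1 c2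
      = (∑ c1 ∈ A ∩ B, f c1 c1) + ∑ c1 ∈ A, ∑ c2 ∈ B.erase c1, f c1 c2 := by
  calc ∑ c1 ∈ A, ∑ c2 ∈ B, f c1 c2
      = ∑ c1 ∈ A, ((if c1 ∈ B then f c1 c1 else 0) + ∑ c2 ∈ B.erase c1, f c1 c2) :=
        Finset.sum_congr rfl (fun c1 _ => sum_split_erase B (f c1) c1)
    _ = (∑ c1 ∈ A, if c1 ∈ B then f c1 c1 else 0)
          + ∑ c1 ∈ A, ∑ c2 ∈ B.erase c1, f c1 c2 := Finset.sum_add_distrib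
    _ = _ := by rw [← Finset.sum_filter, filter_mem_eq_inter]

lemma chromPoly_K2l (l q : ℕ) (hq : 2 ≤ q) :
    chromPoly (K2l l) q = q * (q-1)^l + (q * (q-1)) * (q-2)^l := by
  show numListColorings (K2l l) (fun _ => Icc 1 q) = _
  rw [numListColorings_eq_card, colorings_card]
  have hcard : (Icc 1 q).card = q := by simp
  have hinner : ∀ c1 ∈ Icc 1 q,
      (∑ c2 ∈ Icc 1 q, ∏ _j : Fin l, ((Icc 1 q) \ {c1, c2}).card)
        = (q-1)^l + (q-1) * (q-2)^l := by
    intro c1 hc1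
    rw [sum_split_erase (Icc 1 q) _ c1, if_pos hc1]
    congr 1
    · have h1' : ((Icc 1 q) \ ({c1} : Finset ℕ)).card = q - 1 := by
        rw [card_sdiff_single hc1, hcard]
      simp [h1']
    · have hterm : ∀ c2 ∈ (Icc 1 q).erase c1,
          (∏ _j : Fin l, ((Icc 1 q) \ {c1, c2}).card) = (q-2)^l := by
        intro c2 hc2
        have h2 : c2 ∈ Icc 1 q := mem_of_mem_erase hc2
        have hne : c1 ≠ c2 := (ne_of_mem_erase hc2).symm
        have h3 : ((Icc 1 q) \ {c1, c2}).card = q - 2 := by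
          rw [card_sdiff_mm hc1 h2 hne, hcard]
        simp [h3]
      rw [Finset.sum_congr rfl hterm, Finset.sum_const, card_erase_of_mem hc1, hcard,
        smul_eq_mul]
  rw [Finset.sum_congr rfl hinner, Finset.sum_const, hcard, smul_eq_mul, Nat.mul_add,
    ← mul_assoc]

lemma key_ge (l q : ℕ) (hl : 3 ≤ l) (hq : 2*l + 2 ≤ q)
    (L : Fin 2 ⊕ Fin l → Finset ℕ) (hL : IsAssignment L q) :
    chromPoly (K2l l) q ≤ numListColorings (K2l l) L := by
  classical
  have hq2 : 2 ≤ q := by omega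
  rw [chromPoly_K2l l q hq2, numListColorings_eq_card, colorings_card]
  set A := L (Sum.inl 0) with hA
  set B := L (Sum.inl 1) with hB
  have hcA : A.card = q := hL _
  have hcB : B.card = q := hL _
  set s := (A ∩ B).card with hs
  have hsq : s ≤ q := by rw [← hcA]; exact card_le_card inter_subset_left
  set u : Fin l → ℕ → ℕ := fun j c => if c ∈ L (Sum.inr j) then 0 else 1 with hu
  have hu1 : ∀ j c, u j c ≤ 1 := by intro j c; simp only [hu]; split <;> omega
  rw [double_sum_split A B (fun c1 c2 => ∏ j : Fin l, ((L (Sum.inr j)) \ {c1, c2}).card)]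
  set P1 := (q-1)^l with hP1def
  set P2 := (q-2)^l with hP2def
  -- diagonal bound
  have hdiag : s * P1 ≤ ∑ c1 ∈ A ∩ B, ∏ j : Fin l, ((L (Sum.inr j)) \ {c1, c1}).card := by
    have hpt : ∀ c1 ∈ A ∩ B, P1 ≤ ∏ j : Fin l, ((L (Sum.inr j)) \ {c1, c1}).card := by
      intro c1 _
      have : ∀ j : Fin l, q - 1 ≤ ((L (Sum.inr j)) \ {c1, c1}).card := by
        intro j
        rw [pair_self]
        by_cases h : c1 ∈ L (Sum.inr j)
        · rw [card_sdiff_single h, hL _]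
        · rw [Finset.sdiff_eq_self_of_disjoint (by simpa using h), hL _]; omega
      calc P1 = ∏ _j : Fin l, (q-1) := by simp [hP1def]
        _ ≤ _ := Finset.prod_le_prod' (fun j _ => this j)
    calc s * P1 = ∑ _c1 ∈ A ∩ B, P1 := by rw [Finset.sum_const, smul_eq_mul]
      _ ≤ _ := Finset.sum_le_sum hpt
  -- per-pair factor identity
  have hfac : ∀ (c1 c2 : ℕ), c1 ≠ c2 → ∀ j : Fin l,
      ((L (Sum.inr j)) \ {c1, c2}).card = (q-2) + (u j c1 + u j c2) := by
    intro c1 c2 hne j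
    have hcL : (L (Sum.inr j)).card = q := hL _
    by_cases h1 : c1 ∈ L (Sum.inr j) <;> by_cases h2 : c2 ∈ L (Sum.inr j)
    · rw [card_sdiff_mm h1 h2 hne, hcL]; simp only [hu, if_pos h1, if_pos h2]; omega
    · rw [card_sdiff_mn h1 h2, hcL]; simp only [hu, if_pos h1, if_neg h2]; omega
    · rw [card_sdiff_nm h1 h2, hcL]; simp only [hu, if_neg h1, if_pos h2]; omega
    · rw [card_sdiff_nn h1 h2, hcL]; simp only [hu, if_neg h1, if_neg h2]; omega
  -- per-pair lower bound
  have hoffterm : ∀ c1 ∈ A, ∀ c2 ∈ B.erase c1,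
      P2 + (q-2)^(l-1) * (∑ j : Fin l, (u j c1 + u j c2))
        ≤ ∏ j : Fin l, ((L (Sum.inr j)) \ {c1, c2}).card := by
    intro c1 _ c2 hc2
    have hne : c1 ≠ c2 := (ne_of_mem_erase hc2).symm
    have hnonempty : (univ : Finset (Fin l)).Nonempty := ⟨⟨0, by omega⟩, mem_univ _⟩
    have := prod_add_ge (univ : Finset (Fin l)) hnonempty (q-2)
      (fun j => u j c1 + u j c2)
    rw [card_univ, Fintype.card_fin] at this
    calc P2 + (q-2)^(l-1) * (∑ j : Fin l, (u j c1 + u j c2))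
        ≤ ∏ j : Fin l, ((q-2) + (u j c1 + u j c2)) := this
      _ = _ := Finset.prod_congr rfl (fun j _ => (hfac c1 c2 hne j).symm)
  -- count of off-diagonal pairs
  set offc := ∑ c1 ∈ A, (B.erase c1).card with hoffcdef
  have hoffc : offc + s = q*q := by
    have h1 : ∀ c1 ∈ A, (B.erase c1).card + (if c1 ∈ B then 1 else 0) = q := by
      intro c1 _
      by_cases h : c1 ∈ B
      · rw [if_pos h, card_erase_of_mem h, hcB]; omega
      · rw [if_neg h, erase_eq_of_notMem h, hcB]; omega
    have h2 : (∑ c1 ∈ A, ((B.erase c1).card + (if c1 ∈ B then 1 else 0))) = q * q := by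
      rw [Finset.sum_congr rfl h1, Finset.sum_const, hcA, smul_eq_mul]
    rw [Finset.sum_add_distrib] at h2
    rw [hoffcdef, ← h2]
    congr 1
    rw [← Finset.sum_filter, filter_mem_eq_inter, hs, Finset.sum_const, smul_eq_mul, mul_one]
  -- the E-sum lower bound
  set Etot := ∑ c1 ∈ A, ∑ c2 ∈ B.erase c1, (∑ j : Fin l, (u j c1 + u j c2)) with hEdef
  have hEtot : l * ((q-2) * (q - s)) ≤ Etot := by
    have hswap : Etot = ∑ j : Fin l, ∑ c1 ∈ A, ∑ c2 ∈ B.erase c1, (u j c1 + u j c2) := by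
      rw [hEdef]
      rw [Finset.sum_congr rfl (fun (c1 : ℕ) (_ : c1 ∈ A) => Finset.sum_comm)]
      exact Finset.sum_comm
    rw [hswap]
    have hperj : ∀ j : Fin l,
        (q-2) * (q - s) ≤ ∑ c1 ∈ A, ∑ c2 ∈ B.erase c1, (u j c1 + u j c2) := by
      intro j
      set X := ∑ c ∈ A, u j c with hX
      set Y := ∑ c ∈ B, u j c with hY
      have hsum_sdiff : ∀ (S : Finset ℕ), (∑ c ∈ S, u j c) = (S \ L (Sum.inr j)).card := by
        intro S
        rw [Finset.sdiff_eq_filter]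
        simp only [hu]
        rw [Finset.sum_ite, Finset.sum_const, Finset.sum_const]
        simp
      have hXY : q - s ≤ X + Y := by
        have hXc : X = (A \ L (Sum.inr j)).card := hsum_sdiff A
        have hYc : Y = (B \ L (Sum.inr j)).card := hsum_sdiff B
        have h1 : ((A ∪ B) \ L (Sum.inr j)).card
            ≤ (A \ L (Sum.inr j)).card + (B \ L (Sum.inr j)).card := by
          rw [union_sdiff_distrib]; exact card_union_le _ _
        have h2 : (A ∪ B).card - (L (Sum.inr j)).card ≤ ((A ∪ B) \ L (Sum.inr j)).card :=
          le_card_sdiff _ _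
        have h3 : (A ∪ B).card + s = q + q := by
          rw [hs, card_union_add_card_inter, hcA, hcB]
        have h4 : (L (Sum.inr j)).card = q := hL _
        omega
      have hinner : ∀ c1 ∈ A,
          (q-2) * u j c1 + Y ≤ ∑ c2 ∈ B.erase c1, (u j c1 + u j c2) := by
        intro c1 _
        have hS1 : (∑ c2 ∈ B.erase c1, (u j c1 + u j c2))
            = (B.erase c1).card * u j c1 + ∑ c2 ∈ B.erase c1, u j c2 := by
          rw [Finset.sum_add_distrib, Finset.sum_const, smul_eq_mul]
        have he1 : q - 1 ≤ (B.erase c1).card := by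
          by_cases h : c1 ∈ B
          · rw [card_erase_of_mem h, hcB]
          · rw [erase_eq_of_notMem h, hcB]; omega
        have he2 : Y ≤ (∑ c2 ∈ B.erase c1, u j c2) + u j c1 := by
          rw [hY, sum_split_erase B (u j) c1]
          have : (if c1 ∈ B then u j c1 else 0) ≤ u j c1 := by split <;> omega
          omega
        have hmul : (q - 1) * u j c1 ≤ (B.erase c1).card * u j c1 :=
          Nat.mul_le_mul_right _ he1
        have hq1u : (q - 1) * u j c1 = (q-2) * u j c1 + u j c1 := by
          have hh : q - 1 = (q-2) + 1 := by omega
          rw [hh, add_mul, one_mul]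
        calc (q-2) * u j c1 + Y
            ≤ (q-2) * u j c1 + ((∑ c2 ∈ B.erase c1, u j c2) + u j c1) :=
              Nat.add_le_add_left he2 _
          _ = ((q-2) * u j c1 + u j c1) + ∑ c2 ∈ B.erase c1, u j c2 := by ring
          _ = (q-1) * u j c1 + ∑ c2 ∈ B.erase c1, u j c2 := by rw [hq1u]
          _ ≤ (B.erase c1).card * u j c1 + ∑ c2 ∈ B.erase c1, u j c2 :=
              Nat.add_le_add_right hmul _
          _ = ∑ c2 ∈ B.erase c1, (u j c1 + u j c2) := hS1.symm
      calc (q-2) * (q - s) ≤ (q-2) * (X + Y) := Nat.mul_le_mul_left _ hXY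
        _ ≤ (q-2) * X + A.card * Y := by
            rw [Nat.mul_add]
            exact Nat.add_le_add_left (Nat.mul_le_mul_right _ (by omega : q - 2 ≤ A.card)) _
        _ = ∑ c1 ∈ A, ((q-2) * u j c1 + Y) := by
            rw [Finset.sum_add_distrib, ← Finset.mul_sum, Finset.sum_const, smul_eq_mul, hX]
        _ ≤ _ := Finset.sum_le_sum hinner
    have hconst : (∑ _j : Fin l, (q-2)*(q-s)) = l * ((q-2) * (q-s)) := by
      rw [Finset.sum_const, card_univ, Fintype.card_fin, smul_eq_mul]
    rw [← hconst]
    exact Finset.sum_le_sum (fun j _ => hperj j)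
  -- sum the off-diagonal bound
  have hoff : offc * P2 + (q-2)^(l-1) * Etot
      ≤ ∑ c1 ∈ A, ∑ c2 ∈ B.erase c1, ∏ j : Fin l, ((L (Sum.inr j)) \ {c1, c2}).card := by
    have h1 : ∀ c1 ∈ A,
        (B.erase c1).card * P2 + (q-2)^(l-1) * (∑ c2 ∈ B.erase c1, ∑ j : Fin l, (u j c1 + u j c2))
          ≤ ∑ c2 ∈ B.erase c1, ∏ j : Fin l, ((L (Sum.inr j)) \ {c1, c2}).card := by
      intro c1 hc1
      calc (B.erase c1).card * P2
            + (q-2)^(l-1) * (∑ c2 ∈ B.erase c1, ∑ j : Fin l, (u j c1 + u j c2))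
          = ∑ c2 ∈ B.erase c1, (P2 + (q-2)^(l-1) * (∑ j : Fin l, (u j c1 + u j c2))) := by
            rw [Finset.sum_add_distrib, Finset.sum_const, smul_eq_mul, Finset.mul_sum]
        _ ≤ _ := Finset.sum_le_sum (fun c2 hc2 => hoffterm c1 hc1 c2 hc2)
    calc offc * P2 + (q-2)^(l-1) * Etot
        = ∑ c1 ∈ A, ((B.erase c1).card * P2
            + (q-2)^(l-1) * (∑ c2 ∈ B.erase c1, ∑ j : Fin l, (u j c1 + u j c2))) := by
          rw [Finset.sum_add_distrib, ← Finset.sum_mul, ← Finset.mul_sum, hoffcdef, hEdef]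
      _ ≤ _ := Finset.sum_le_sum h1
  -- pow facts
  have hP1le : P1 ≤ (l+1) * P2 := by
    have hh : q - 1 = (q-2) + 1 := by omega
    rw [hP1def, hh]
    calc ((q-2)+1)^l ≤ 2 * (q-2)^l := pow_succ_le_two_pow (by omega)
      _ ≤ (l+1) * (q-2)^l := Nat.mul_le_mul_right _ (by omega)
  have hP2eq : (q-2)^(l-1) * (q-2) = P2 := by
    rw [hP2def, ← pow_succ]; congr 1; omega
  have hEfin : l * ((q-s)*P2) ≤ (q-2)^(l-1) * Etot := by
    calc l * ((q-s)*P2) = (q-2)^(l-1) * (l * ((q-2) * (q-s))) := by rw [← hP2eq]; ring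
      _ ≤ (q-2)^(l-1) * Etot := Nat.mul_le_mul_left _ hEtot
  -- final arithmetic
  set D := q - s with hD
  have hsD : s + D = q := by omega
  have hq1 : q * (q-1) + q = q * q := by
    have h1 : q - 1 + 1 = q := by omega
    calc q * (q-1) + q = q * ((q-1)+1) := by ring
      _ = q * q := by rw [h1]
  have hkeyc : offc = q * (q-1) + D := by
    have hh : offc + s = (q * (q-1) + D) + s := by rw [hoffc, ← hq1, ← hsD]; ring
    omega
  calc q * P1 + (q * (q-1)) * P2
      = s * P1 + D * P1 + (q * (q-1)) * P2 := by rw [← hsD, Nat.add_mul]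
    _ ≤ s * P1 + D * ((l+1) * P2) + (q * (q-1)) * P2 :=
        Nat.add_le_add_right (Nat.add_le_add_left (Nat.mul_le_mul_left D hP1le) _) _
    _ = s * P1 + ((q * (q-1) + D) * P2 + l * ((q-s) * P2)) := by rw [← hD]; ring
    _ = s * P1 + (offc * P2 + l * ((q-s) * P2)) := by rw [hkeyc]
    _ ≤ s * P1 + (offc * P2 + (q-2)^(l-1) * Etot) :=
        Nat.add_le_add_left (Nat.add_le_add_left hEfin _) _
    _ ≤ _ := add_le_add hdiag hoff
lemma const_assign (l q : ℕ) : IsAssignment (fun _ : Fin 2 ⊕ Fin l => Icc 1 q) q :=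
  fun _ => by simp

lemma lcf_eq (l q : ℕ) (hl : 3 ≤ l) (hq : 2*l+2 ≤ q) :
    listColorFunction (K2l l) q = chromPoly (K2l l) q := by
  have hmem : chromPoly (K2l l) q ∈
      {p | ∃ L : Fin 2 ⊕ Fin l → Finset ℕ, IsAssignment L q ∧ numListColorings (K2l l) L = p} :=
    ⟨_, const_assign l q, rfl⟩
  apply le_antisymm (Nat.sInf_le hmem)
  apply le_csInf ⟨_, hmem⟩
  rintro p ⟨L, hLa, rfl⟩
  exact key_ge l q hl hq L hLa

lemma chromNum_le_two (l : ℕ) (hl : 1 ≤ l) : chromNum (K2l l) ≤ 2 := by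
  apply Nat.sInf_le
  show 0 < chromPoly (K2l l) 2
  rw [chromPoly_K2l l 2 le_rfl]
  have h1 : 2 * (2-1)^l = 2 := by norm_num
  omega
def Kc (m : ℕ) : Finset ℕ := Icc 1 (m-2)

def Lbad (m t g : ℕ) : Fin 2 ⊕ Fin (4*t+g) → Finset ℕ :=
  Sum.elim (fun i => if i = 0 then Kc m ∪ {m-1, m} else Kc m ∪ {m+1, m+2})
    (fun j => if (j:ℕ) < t then Kc m ∪ {m-1, m+1}
      else if (j:ℕ) < 2*t then Kc m ∪ {m-1, m+2}
      else if (j:ℕ) < 3*t then Kc m ∪ {m, m+1}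
      else if (j:ℕ) < 4*t then Kc m ∪ {m, m+2}
      else Kc m ∪ {m-1, m})

lemma prod_ite_groups (a b c d e t g : ℕ) :
    (∏ j : Fin (4*t+g),
      (if (j:ℕ) < t then a else if (j:ℕ) < 2*t then b else if (j:ℕ) < 3*t then c
        else if (j:ℕ) < 4*t then d else e))
      = a^t * b^t * c^t * d^t * e^g := by
  rw [Fin.prod_univ_eq_prod_range
    (fun i => if i < t then a else if i < 2*t then b else if i < 3*t then c
      else if i < 4*t then d else e) (4*t+g)]
  rw [Finset.range_eq_Ico]
  rw [← Finset.prod_Ico_consecutive _ (by omega : 0 ≤ t) (by omega : t ≤ 4*t+g)]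
  rw [← Finset.prod_Ico_consecutive _ (by omega : t ≤ 2*t) (by omega : 2*t ≤ 4*t+g)]
  rw [← Finset.prod_Ico_consecutive _ (by omega : 2*t ≤ 3*t) (by omega : 3*t ≤ 4*t+g)]
  rw [← Finset.prod_Ico_consecutive _ (by omega : 3*t ≤ 4*t) (by omega : 4*t ≤ 4*t+g)]
  have h1 : ∀ x ∈ Finset.Ico 0 t, (if x < t then a else if x < 2*t then b else if x < 3*t then c
      else if x < 4*t then d else e) = a := by
    intro x hx; rw [Finset.mem_Ico] at hx; split_ifs with h' <;> omega
  have h2 : ∀ x ∈ Finset.Ico t (2*t), (if x < t then a else if x < 2*t then b else if x < 3*t then c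
      else if x < 4*t then d else e) = b := by
    intro x hx; rw [Finset.mem_Ico] at hx; split_ifs <;> omega
  have h3 : ∀ x ∈ Finset.Ico (2*t) (3*t), (if x < t then a else if x < 2*t then b
      else if x < 3*t then c else if x < 4*t then d else e) = c := by
    intro x hx; rw [Finset.mem_Ico] at hx; split_ifs <;> omega
  have h4 : ∀ x ∈ Finset.Ico (3*t) (4*t), (if x < t then a else if x < 2*t then b
      else if x < 3*t then c else if x < 4*t then d else e) = d := by
    intro x hx; rw [Finset.mem_Ico] at hx; split_ifs <;> omega
  have h5 : ∀ x ∈ Finset.Ico (4*t) (4*t+g), (if x < t then a else if x < 2*t then b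
      else if x < 3*t then c else if x < 4*t then d else e) = e := by
    intro x hx; rw [Finset.mem_Ico] at hx; split_ifs <;> omega
  rw [Finset.prod_congr rfl h1, Finset.prod_congr rfl h2, Finset.prod_congr rfl h3,
    Finset.prod_congr rfl h4, Finset.prod_congr rfl h5]
  simp only [Finset.prod_const, Nat.card_Ico]
  have e1 : t - 0 = t := by omega
  have e2 : 2*t - t = t := by omega
  have e3 : 3*t - 2*t = t := by omega
  have e4 : 4*t - 3*t = t := by omega
  have e5 : 4*t+g - 4*t = g := by omega
  rw [e1, e2, e3, e4, e5]
  ring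
lemma Fbad_eval (m t g : ℕ) (hm : 3 ≤ m) :
    numListColorings (K2l (4*t+g)) (Lbad m t g)
      = (m-2) * ((m-1)^(4*t+g) + (m-3)*(m-2)^(4*t+g)
          + 2*((m-2)^(2*t) * (m-1)^(2*t+g)))
        + 2*((m-2) * ((m-2)^(2*t+g) * (m-1)^(2*t))
          + 2*((m-2)^t * (m-1)^(2*t+g) * m^t)) := by
  classical
  have hL0 : Lbad m t g (Sum.inl 0) = Kc m ∪ {m-1, m} := by simp [Lbad]
  have hL1 : Lbad m t g (Sum.inl 1) = Kc m ∪ {m+1, m+2} := by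
    simp only [Lbad, Sum.elim_inl]
    norm_num
  have hKmem : ∀ x, x ∈ Kc m ↔ 1 ≤ x ∧ x ≤ m - 2 := fun x => by simp [Kc]
  have hmemU : ∀ (x y z : ℕ), z ∈ Kc m ∪ {x, y} ↔ ((1 ≤ z ∧ z ≤ m-2) ∨ z = x ∨ z = y) := by
    intro x y z
    simp only [Kc, Finset.mem_union, Finset.mem_insert, Finset.mem_singleton, Finset.mem_Icc]
  have hcardK : (Kc m).card = m - 2 := by simp [Kc]
  have cardU : ∀ x y : ℕ, m - 2 < x → m - 2 < y → x ≠ y → (Kc m ∪ {x, y}).card = m := by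
    intro x y hx hy hxy
    have hd : Disjoint (Kc m) ({x, y} : Finset ℕ) := by
      rw [Finset.disjoint_right]
      intro a ha
      simp only [Finset.mem_insert, Finset.mem_singleton] at ha
      rw [hKmem]
      rcases ha with rfl | rfl <;> omega
    rw [Finset.card_union_of_disjoint hd, hcardK, Finset.card_pair hxy]
    omega
  have hc11 : (Kc m ∪ {m-1, m+1}).card = m := cardU _ _ (by omega) (by omega) (by omega)
  have hc12 : (Kc m ∪ {m-1, m+2}).card = m := cardU _ _ (by omega) (by omega) (by omega)
  have hc21 : (Kc m ∪ {m, m+1}).card = m := cardU _ _ (by omega) (by omega) (by omega)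
  have hc22 : (Kc m ∪ {m, m+2}).card = m := cardU _ _ (by omega) (by omega) (by omega)
  have hcA : (Kc m ∪ {m-1, m}).card = m := cardU _ _ (by omega) (by omega) (by omega)
  -- the per-pair product decomposition
  have hprod : ∀ c1 c2 : ℕ,
      (∏ j : Fin (4*t+g), ((Lbad m t g (Sum.inr j)) \ {c1, c2}).card)
        = ((Kc m ∪ {m-1,m+1}) \ {c1,c2}).card ^ t
          * ((Kc m ∪ {m-1,m+2}) \ {c1,c2}).card ^ t
          * ((Kc m ∪ {m,m+1}) \ {c1,c2}).card ^ t
          * ((Kc m ∪ {m,m+2}) \ {c1,c2}).card ^ t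
          * ((Kc m ∪ {m-1,m}) \ {c1,c2}).card ^ g := by
    intro c1 c2
    rw [← prod_ite_groups]
    apply Finset.prod_congr rfl
    intro j _
    simp only [Lbad, Sum.elim_inr]
    split_ifs <;> rfl
  -- case values
  have hPdiag : ∀ c ∈ Kc m,
      (∏ j : Fin (4*t+g), ((Lbad m t g (Sum.inr j)) \ {c, c}).card) = (m-1)^(4*t+g) := by
    intro c hc
    obtain ⟨hc1, hc2⟩ := (hKmem c).1 hc
    have h : ∀ (x y : ℕ), m - 2 < x → m - 2 < y → x ≠ y →
        ((Kc m ∪ {x,y}) \ {c, c}).card = m - 1 := by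
      intro x y hx hy hxy
      rw [pair_self, card_sdiff_single (Finset.mem_union_left _ hc), cardU x y hx hy hxy]
    rw [hprod, h _ _ (by omega) (by omega) (by omega), h _ _ (by omega) (by omega) (by omega),
      h _ _ (by omega) (by omega) (by omega), h _ _ (by omega) (by omega) (by omega),
      h _ _ (by omega) (by omega) (by omega), ← pow_add, ← pow_add, ← pow_add, ← pow_add]
    congr 1
    omega
  have hPKK : ∀ c1 ∈ Kc m, ∀ c2 ∈ Kc m, c1 ≠ c2 →
      (∏ j : Fin (4*t+g), ((Lbad m t g (Sum.inr j)) \ {c1, c2}).card) = (m-2)^(4*t+g) := by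
    intro c1 hcm1 c2 hcm2 hne
    have h : ∀ (x y : ℕ), m - 2 < x → m - 2 < y → x ≠ y →
        ((Kc m ∪ {x,y}) \ {c1, c2}).card = m - 2 := by
      intro x y hx hy hxy
      rw [card_sdiff_mm (Finset.mem_union_left _ hcm1) (Finset.mem_union_left _ hcm2) hne,
        cardU x y hx hy hxy]
    rw [hprod, h _ _ (by omega) (by omega) (by omega), h _ _ (by omega) (by omega) (by omega),
      h _ _ (by omega) (by omega) (by omega), h _ _ (by omega) (by omega) (by omega),
      h _ _ (by omega) (by omega) (by omega), ← pow_add, ← pow_add, ← pow_add, ← pow_add]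
    congr 1
    omega
  have hpowKside : (m-2)^t * (m-1)^t * (m-2)^t * (m-1)^t * (m-1)^g
      = (m-2)^(2*t) * (m-1)^(2*t+g) := by
    rw [show 2*t = t + t from by omega, pow_add, pow_add, pow_add]
    ring
  have hpowKside' : (m-1)^t * (m-2)^t * (m-1)^t * (m-2)^t * (m-1)^g
      = (m-2)^(2*t) * (m-1)^(2*t+g) := by rw [← hpowKside]; ring
  have hPK1 : ∀ c1 ∈ Kc m,
      (∏ j : Fin (4*t+g), ((Lbad m t g (Sum.inr j)) \ {c1, m+1}).card)
        = (m-2)^(2*t) * (m-1)^(2*t+g) := by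
    intro c1 hc
    obtain ⟨hb1, hb2⟩ := (hKmem c1).1 hc
    rw [hprod,
      card_sdiff_mm (Finset.mem_union_left _ hc) (by rw [hmemU]; omega) (by omega), hc11,
      card_sdiff_mn (Finset.mem_union_left _ hc) (by rw [hmemU]; omega), hc12,
      card_sdiff_mm (Finset.mem_union_left _ hc) (by rw [hmemU]; omega) (by omega), hc21,
      card_sdiff_mn (Finset.mem_union_left _ hc) (by rw [hmemU]; omega), hc22,
      card_sdiff_mn (Finset.mem_union_left _ hc) (by rw [hmemU]; omega), hcA]
    exact hpowKside
  have hPK2 : ∀ c1 ∈ Kc m,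
      (∏ j : Fin (4*t+g), ((Lbad m t g (Sum.inr j)) \ {c1, m+2}).card)
        = (m-2)^(2*t) * (m-1)^(2*t+g) := by
    intro c1 hc
    obtain ⟨hb1, hb2⟩ := (hKmem c1).1 hc
    rw [hprod,
      card_sdiff_mn (Finset.mem_union_left _ hc) (by rw [hmemU]; omega), hc11,
      card_sdiff_mm (Finset.mem_union_left _ hc) (by rw [hmemU]; omega) (by omega), hc12,
      card_sdiff_mn (Finset.mem_union_left _ hc) (by rw [hmemU]; omega), hc21,
      card_sdiff_mm (Finset.mem_union_left _ hc) (by rw [hmemU]; omega) (by omega), hc22,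
      card_sdiff_mn (Finset.mem_union_left _ hc) (by rw [hmemU]; omega), hcA]
    exact hpowKside'
  have hpowMside : (m-2)^t * (m-2)^t * (m-1)^t * (m-1)^t * (m-2)^g
      = (m-2)^(2*t+g) * (m-1)^(2*t) := by
    rw [show 2*t = t + t from by omega, pow_add, pow_add, pow_add]
    ring
  have hpowMside' : (m-1)^t * (m-1)^t * (m-2)^t * (m-2)^t * (m-2)^g
      = (m-2)^(2*t+g) * (m-1)^(2*t) := by rw [← hpowMside]; ring
  have hP1K : ∀ c2 ∈ Kc m,
      (∏ j : Fin (4*t+g), ((Lbad m t g (Sum.inr j)) \ {m-1, c2}).card)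
        = (m-2)^(2*t+g) * (m-1)^(2*t) := by
    intro c2 hc
    obtain ⟨hb1, hb2⟩ := (hKmem c2).1 hc
    rw [hprod,
      card_sdiff_mm (by rw [hmemU]; omega) (Finset.mem_union_left _ hc) (by omega), hc11,
      card_sdiff_mm (by rw [hmemU]; omega) (Finset.mem_union_left _ hc) (by omega), hc12,
      card_sdiff_nm (by rw [hmemU]; omega) (Finset.mem_union_left _ hc), hc21,
      card_sdiff_nm (by rw [hmemU]; omega) (Finset.mem_union_left _ hc), hc22,
      card_sdiff_mm (by rw [hmemU]; omega) (Finset.mem_union_left _ hc) (by omega), hcA]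
    exact hpowMside
  have hPmK : ∀ c2 ∈ Kc m,
      (∏ j : Fin (4*t+g), ((Lbad m t g (Sum.inr j)) \ {m, c2}).card)
        = (m-2)^(2*t+g) * (m-1)^(2*t) := by
    intro c2 hc
    obtain ⟨hb1, hb2⟩ := (hKmem c2).1 hc
    rw [hprod,
      card_sdiff_nm (by rw [hmemU]; omega) (Finset.mem_union_left _ hc), hc11,
      card_sdiff_nm (by rw [hmemU]; omega) (Finset.mem_union_left _ hc), hc12,
      card_sdiff_mm (by rw [hmemU]; omega) (Finset.mem_union_left _ hc) (by omega), hc21,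
      card_sdiff_mm (by rw [hmemU]; omega) (Finset.mem_union_left _ hc) (by omega), hc22,
      card_sdiff_mm (by rw [hmemU]; omega) (Finset.mem_union_left _ hc) (by omega), hcA]
    exact hpowMside'
  have hpowX3 : ∀ (a1 a2 a3 a4 : ℕ), a1 * a2 * a3 * a4 = (m-2) * (m-1) * (m-1) * m →
      True := fun _ _ _ _ _ => trivial
  have hP11 :
      (∏ j : Fin (4*t+g), ((Lbad m t g (Sum.inr j)) \ {m-1, m+1}).card)
        = (m-2)^t * (m-1)^(2*t+g) * m^t := by
    rw [hprod,
      card_sdiff_mm (by rw [hmemU]; omega) (by rw [hmemU]; omega) (by omega), hc11,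
      card_sdiff_mn (by rw [hmemU]; omega) (by rw [hmemU]; omega), hc12,
      card_sdiff_nm (by rw [hmemU]; omega) (by rw [hmemU]; omega), hc21,
      card_sdiff_nn (by rw [hmemU]; omega) (by rw [hmemU]; omega), hc22,
      card_sdiff_mn (by rw [hmemU]; omega) (by rw [hmemU]; omega), hcA,
      show 2*t + g = t + (t + g) from by omega, pow_add, pow_add]
    ring
  have hP12 :
      (∏ j : Fin (4*t+g), ((Lbad m t g (Sum.inr j)) \ {m-1, m+2}).card)
        = (m-2)^t * (m-1)^(2*t+g) * m^t := by
    rw [hprod,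
      card_sdiff_mn (by rw [hmemU]; omega) (by rw [hmemU]; omega), hc11,
      card_sdiff_mm (by rw [hmemU]; omega) (by rw [hmemU]; omega) (by omega), hc12,
      card_sdiff_nn (by rw [hmemU]; omega) (by rw [hmemU]; omega), hc21,
      card_sdiff_nm (by rw [hmemU]; omega) (by rw [hmemU]; omega), hc22,
      card_sdiff_mn (by rw [hmemU]; omega) (by rw [hmemU]; omega), hcA,
      show 2*t + g = t + (t + g) from by omega, pow_add, pow_add]
    ring
  have hP21' :
      (∏ j : Fin (4*t+g), ((Lbad m t g (Sum.inr j)) \ {m, m+1}).card)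
        = (m-2)^t * (m-1)^(2*t+g) * m^t := by
    rw [hprod,
      card_sdiff_nm (by rw [hmemU]; omega) (by rw [hmemU]; omega), hc11,
      card_sdiff_nn (by rw [hmemU]; omega) (by rw [hmemU]; omega), hc12,
      card_sdiff_mm (by rw [hmemU]; omega) (by rw [hmemU]; omega) (by omega), hc21,
      card_sdiff_mn (by rw [hmemU]; omega) (by rw [hmemU]; omega), hc22,
      card_sdiff_mn (by rw [hmemU]; omega) (by rw [hmemU]; omega), hcA,
      show 2*t + g = t + (t + g) from by omega, pow_add, pow_add]
    ring
  have hP22' :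
      (∏ j : Fin (4*t+g), ((Lbad m t g (Sum.inr j)) \ {m, m+2}).card)
        = (m-2)^t * (m-1)^(2*t+g) * m^t := by
    rw [hprod,
      card_sdiff_nn (by rw [hmemU]; omega) (by rw [hmemU]; omega), hc11,
      card_sdiff_nm (by rw [hmemU]; omega) (by rw [hmemU]; omega), hc12,
      card_sdiff_mn (by rw [hmemU]; omega) (by rw [hmemU]; omega), hc21,
      card_sdiff_mm (by rw [hmemU]; omega) (by rw [hmemU]; omega) (by omega), hc22,
      card_sdiff_mn (by rw [hmemU]; omega) (by rw [hmemU]; omega), hcA,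
      show 2*t + g = t + (t + g) from by omega, pow_add, pow_add]
    ring
  -- now assemble the double sum
  rw [numListColorings_eq_card, colorings_card, hL0, hL1]
  have hdKB : Disjoint (Kc m) ({m+1, m+2} : Finset ℕ) := by
    rw [Finset.disjoint_right]
    intro a ha
    simp only [Finset.mem_insert, Finset.mem_singleton] at ha
    rw [hKmem]
    rcases ha with rfl | rfl <;> omega
  have hdKA : Disjoint (Kc m) ({m-1, m} : Finset ℕ) := by
    rw [Finset.disjoint_right]
    intro a ha
    simp only [Finset.mem_insert, Finset.mem_singleton] at ha
    rw [hKmem]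
    rcases ha with rfl | rfl <;> omega
  have hinnerK : ∀ c1 ∈ Kc m,
      (∑ c2 ∈ Kc m ∪ {m+1, m+2}, ∏ j : Fin (4*t+g), ((Lbad m t g (Sum.inr j)) \ {c1, c2}).card)
        = (m-1)^(4*t+g) + (m-3)*(m-2)^(4*t+g) + 2*((m-2)^(2*t) * (m-1)^(2*t+g)) := by
    intro c1 hc1
    rw [Finset.sum_union hdKB, Finset.sum_pair (by omega : m+1 ≠ m+2)]
    rw [sum_split_erase (Kc m) _ c1, if_pos hc1]
    rw [hPdiag c1 hc1, hPK1 c1 hc1, hPK2 c1 hc1]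
    have herase : ∀ c2 ∈ (Kc m).erase c1,
        (∏ j : Fin (4*t+g), ((Lbad m t g (Sum.inr j)) \ {c1, c2}).card) = (m-2)^(4*t+g) := by
      intro c2 hc2
      exact hPKK c1 hc1 c2 (Finset.mem_of_mem_erase hc2) (Ne.symm (Finset.ne_of_mem_erase hc2))
    rw [Finset.sum_congr rfl herase, Finset.sum_const, Finset.card_erase_of_mem hc1, hcardK,
      smul_eq_mul]
    have : m - 2 - 1 = m - 3 := by omega
    rw [this]
    ring
  have hinner1 :
      (∑ c2 ∈ Kc m ∪ {m+1, m+2}, ∏ j : Fin (4*t+g), ((Lbad m t g (Sum.inr j)) \ {m-1, c2}).card)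
        = (m-2)*((m-2)^(2*t+g) * (m-1)^(2*t)) + 2*((m-2)^t * (m-1)^(2*t+g) * m^t) := by
    rw [Finset.sum_union hdKB, Finset.sum_pair (by omega : m+1 ≠ m+2)]
    rw [Finset.sum_congr rfl (fun c2 hc2 => hP1K c2 hc2), Finset.sum_const, hcardK, smul_eq_mul,
      hP11, hP12]
    ring
  have hinnerm :
      (∑ c2 ∈ Kc m ∪ {m+1, m+2}, ∏ j : Fin (4*t+g), ((Lbad m t g (Sum.inr j)) \ {m, c2}).card)
        = (m-2)*((m-2)^(2*t+g) * (m-1)^(2*t)) + 2*((m-2)^t * (m-1)^(2*t+g) * m^t) := by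
    rw [Finset.sum_union hdKB, Finset.sum_pair (by omega : m+1 ≠ m+2)]
    rw [Finset.sum_congr rfl (fun c2 hc2 => hPmK c2 hc2), Finset.sum_const, hcardK, smul_eq_mul,
      hP21', hP22']
    ring
  rw [Finset.sum_union hdKA, Finset.sum_pair (by omega : m-1 ≠ m)]
  rw [Finset.sum_congr rfl hinnerK, Finset.sum_const, hcardK, smul_eq_mul, hinner1, hinnerm]
  ring
lemma cardU_lemma (m x y : ℕ) (hm : 2 ≤ m) (hx : m - 2 < x) (hy : m - 2 < y) (hxy : x ≠ y) :
    (Kc m ∪ {x, y}).card = m := by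
  have hd : Disjoint (Kc m) ({x, y} : Finset ℕ) := by
    rw [Finset.disjoint_right]
    intro a ha
    simp only [Finset.mem_insert, Finset.mem_singleton] at ha
    simp only [Kc, Finset.mem_Icc]
    rcases ha with rfl | rfl <;> omega
  rw [Finset.card_union_of_disjoint hd, Finset.card_pair hxy]
  simp only [Kc, Nat.card_Icc]
  omega

lemma Lbad_assign (m t g : ℕ) (hm : 3 ≤ m) : IsAssignment (Lbad m t g) m := by
  rintro (i | j)
  · fin_cases i
    · show (Lbad m t g (Sum.inl 0)).card = m
      have h : Lbad m t g (Sum.inl 0) = Kc m ∪ {m-1, m} := by simp [Lbad]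
      rw [h]; exact cardU_lemma m _ _ (by omega) (by omega) (by omega) (by omega)
    · show (Lbad m t g (Sum.inl 1)).card = m
      have h : Lbad m t g (Sum.inl 1) = Kc m ∪ {m+1, m+2} := by
        simp only [Lbad, Sum.elim_inl]; norm_num
      rw [h]; exact cardU_lemma m _ _ (by omega) (by omega) (by omega) (by omega)
  · show (Lbad m t g (Sum.inr j)).card = m
    simp only [Lbad, Sum.elim_inr]
    split_ifs <;>
      exact cardU_lemma m _ _ (by omega) (by omega) (by omega) (by omega)

lemma Fbad_lt (m t g : ℕ) (hm : 3 ≤ m) (ht : 1 ≤ t) (ε : ℝ) (hε : ε ∈ Set.Ioo (0 : ℝ) 2)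
    (h1 : (((m:ℝ) - 2) / ((m:ℝ) - 1))^(2*t) < ε / (4 * ((m:ℝ) - 2)))
    (h2 : ((1:ℝ) - 1 / ((m:ℝ) - 1)^2)^t < (2 - ε) / 4) :
    numListColorings (K2l (4*t+g)) (Lbad m t g) < chromPoly (K2l (4*t+g)) m := by
  obtain ⟨hε0, hε2⟩ := hε
  rw [Fbad_eval m t g hm, chromPoly_K2l _ m (by omega)]
  rw [← Nat.cast_lt (α := ℝ)]
  have hm1 : (1:ℕ) ≤ m := by omega
  have hm2 : (2:ℕ) ≤ m := by omega
  have hm3' : (3:ℕ) ≤ m := hm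
  push_cast [Nat.cast_sub hm1, Nat.cast_sub hm2, Nat.cast_sub hm3']
  set M := (m:ℝ) with hM
  have hM3 : (3:ℝ) ≤ M := by rw [hM]; exact_mod_cast hm
  set a := M - 1 with hadef
  set b := M - 2 with hbdef
  have ha0 : 0 < a := by rw [hadef]; linarith
  have hb0 : 0 < b := by rw [hbdef]; linarith
  have hba : b < a := by rw [hadef, hbdef]; linarith
  -- key power identities
  have hiu : (b/a)^(2*t) * a^(4*t+g) = b^(2*t) * a^(2*t+g) := by
    rw [div_pow, show 4*t+g = 2*t + (2*t+g) from by omega, pow_add]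
    field_simp
  have hiw : ((1:ℝ) - 1/a^2)^t * a^(4*t+g) = b^t * M^t * a^(2*t+g) := by
    have hsq : a^2 - 1 = b * M := by rw [hadef, hbdef]; ring
    have h1a : (1:ℝ) - 1/a^2 = b*M/a^2 := by
      rw [eq_div_iff (by positivity : (a:ℝ)^2 ≠ 0), sub_mul, one_mul, ← hsq]
      field_simp
    rw [h1a, div_pow, mul_pow, show 4*t+g = 2*t + (2*t+g) from by omega, pow_add,
      pow_mul a 2 t]
    field_simp
  have hu' : b^(2*t+g) * a^(2*t) ≤ b^(2*t) * a^(2*t+g) := by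
    rw [show 2*t+g = 2*t + g from rfl, pow_add, pow_add]
    have hgle : b^g ≤ a^g := pow_le_pow_left₀ (le_of_lt hb0) (le_of_lt hba) g
    calc b^(2*t) * b^g * a^(2*t) ≤ b^(2*t) * a^g * a^(2*t) := by
          apply mul_le_mul_of_nonneg_right _ (by positivity)
          exact mul_le_mul_of_nonneg_left hgle (by positivity)
      _ = b^(2*t) * (a^(2*t) * a^g) := by ring
  have h4bu : 4 * b * (b/a)^(2*t) < ε := by
    calc 4 * b * (b/a)^(2*t) = (4*b) * ((b/a)^(2*t)) := by ring
      _ < (4*b) * (ε / (4 * b)) := mul_lt_mul_of_pos_left h1 (by positivity)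
      _ = ε := by field_simp
  have h4w : 4 * ((1:ℝ) - 1/a^2)^t < 2 - ε := by
    calc (4:ℝ) * ((1:ℝ) - 1/a^2)^t < 4 * ((2 - ε)/4) := mul_lt_mul_of_pos_left h2 (by norm_num)
      _ = 2 - ε := by ring
  have hcoef : 4 * b * (b/a)^(2*t) + 4 * ((1:ℝ) - 1/a^2)^t < 2 := by linarith
  have key : 2*b*(b^(2*t) * a^(2*t+g)) + 2*b*(b^(2*t+g) * a^(2*t))
      + 4*(b^t * M^t * a^(2*t+g)) < 2 * a^(4*t+g) := by
    have hYX : 2*b*(b^(2*t+g) * a^(2*t)) ≤ 2*b*(b^(2*t) * a^(2*t+g)) :=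
      mul_le_mul_of_nonneg_left hu' (by positivity)
    calc 2*b*(b^(2*t) * a^(2*t+g)) + 2*b*(b^(2*t+g) * a^(2*t)) + 4*(b^t * M^t * a^(2*t+g))
        ≤ 2*b*(b^(2*t) * a^(2*t+g)) + 2*b*(b^(2*t) * a^(2*t+g)) + 4*(b^t * M^t * a^(2*t+g)) := by
          linarith
      _ = (4*b*(b/a)^(2*t) + 4*((1:ℝ)-1/a^2)^t) * a^(4*t+g) := by
          rw [add_mul]
          rw [show (4:ℝ)*b*(b/a)^(2*t) * a^(4*t+g) = (4*b) * ((b/a)^(2*t) * a^(4*t+g)) from by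
            ring]
          rw [show (4:ℝ)*((1:ℝ)-1/a^2)^t * a^(4*t+g)
            = 4 * (((1:ℝ)-1/a^2)^t * a^(4*t+g)) from by ring]
          rw [hiu, hiw]
          ring
      _ < 2 * a^(4*t+g) := mul_lt_mul_of_pos_right hcoef (by positivity)
  have hm3b : M - 3 = b - 1 := by rw [hbdef]; ring
  rw [hm3b]
  have hMb : M = b + 2 := by rw [hbdef]; ring
  have hab : a = b + 1 := by rw [hadef, hbdef]; ring
  have h3 : b*(b-1) * b^(4*t+g) ≤ M * a * b^(4*t+g) := by
    apply mul_le_mul_of_nonneg_right _ (by positivity)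
    nlinarith [hb0]
  have h4 : M * a^(4*t+g) = b * a^(4*t+g) + 2 * a^(4*t+g) := by rw [hMb]; ring
  nlinarith [key, h3, h4]

/-- Lemma 6 of the paper: if `t ∈ ℕ`, `m ≥ 3`, and
`t > max{ln(ε/(4(m-2)))/(2 ln((m-2)/(m-1))), ln((2-ε)/4)/ln(1-1/(m-1)²)}` for some
`ε ∈ (0,2)`, then `τ(K_{2,l}) > m` whenever `l ≥ 4t`. -/
theorem lcfThreshold_gt_of_t (m t : ℕ) (hm : 3 ≤ m) (ht : 1 ≤ t)
    (ε : ℝ) (hε : ε ∈ Set.Ioo (0 : ℝ) 2)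
    (htgt : (t : ℝ) >
      max (Real.log (ε / (4 * ((m : ℝ) - 2))) / (2 * Real.log (((m : ℝ) - 2) / ((m : ℝ) - 1))))
        (Real.log ((2 - ε) / 4) / Real.log (1 - 1 / ((m : ℝ) - 1) ^ 2))) :
    ∀ l : ℕ, 4 * t ≤ l → m < lcfThreshold (K2l l) := by
  obtain ⟨hε0, hε2⟩ := hε
  intro l hl
  obtain ⟨g, rfl⟩ : ∃ g, l = 4*t + g := ⟨l - 4*t, by omega⟩
  have hM3 : (3:ℝ) ≤ (m:ℝ) := by exact_mod_cast hm
  have hb0 : (0:ℝ) < (m:ℝ) - 2 := by linarith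
  have ha0 : (0:ℝ) < (m:ℝ) - 1 := by linarith
  have hr0 : (0:ℝ) < ((m:ℝ)-2)/((m:ℝ)-1) := by positivity
  have hr1 : ((m:ℝ)-2)/((m:ℝ)-1) < 1 := by rw [div_lt_one ha0]; linarith
  have hc1pos : (0:ℝ) < ε / (4*((m:ℝ)-2)) := by positivity
  have hlogr : Real.log (((m:ℝ)-2)/((m:ℝ)-1)) < 0 := Real.log_neg hr0 hr1
  -- first exponential inequality
  have hX : Real.log (ε / (4 * ((m : ℝ) - 2)))
      / (2 * Real.log (((m : ℝ) - 2) / ((m : ℝ) - 1))) < (t:ℝ) :=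
    (le_max_left _ _).trans_lt htgt
  have h1' : (t:ℝ) * (2 * Real.log (((m:ℝ)-2)/((m:ℝ)-1)))
      < Real.log (ε/(4*((m:ℝ)-2))) :=
    (div_lt_iff_of_neg (by linarith)).1 hX
  have h1 : (((m:ℝ)-2)/((m:ℝ)-1))^(2*t) < ε/(4*((m:ℝ)-2)) := by
    have hlog : Real.log ((((m:ℝ)-2)/((m:ℝ)-1))^(2*t)) < Real.log (ε/(4*((m:ℝ)-2))) := by
      rw [Real.log_pow]
      push_cast
      linarith
    have hexp := Real.exp_lt_exp.2 hlog
    rwa [Real.exp_log (by positivity), Real.exp_log hc1pos] at hexp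
  -- second exponential inequality
  have hasq : (4:ℝ) ≤ ((m:ℝ)-1)^2 := by nlinarith
  have hw0 : (0:ℝ) < 1 - 1/((m:ℝ)-1)^2 := by
    have : 1/((m:ℝ)-1)^2 < 1 := by
      rw [div_lt_one (by positivity)]
      linarith
    linarith
  have hw1 : 1 - 1/((m:ℝ)-1)^2 < 1 := by
    have : (0:ℝ) < 1/((m:ℝ)-1)^2 := by positivity
    linarith
  have hc2pos : (0:ℝ) < (2 - ε)/4 := by linarith
  have hlogw : Real.log (1 - 1/((m:ℝ)-1)^2) < 0 := Real.log_neg hw0 hw1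
  have hY : Real.log ((2 - ε) / 4) / Real.log (1 - 1 / ((m : ℝ) - 1) ^ 2) < (t:ℝ) :=
    (le_max_right _ _).trans_lt htgt
  have h2' : (t:ℝ) * Real.log (1 - 1/((m:ℝ)-1)^2) < Real.log ((2 - ε)/4) :=
    (div_lt_iff_of_neg hlogw).1 hY
  have h2 : ((1:ℝ) - 1/((m:ℝ)-1)^2)^t < (2 - ε)/4 := by
    have hlog : Real.log (((1:ℝ) - 1/((m:ℝ)-1)^2)^t) < Real.log ((2 - ε)/4) := by
      rw [Real.log_pow]
      push_cast
      linarith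
    have hexp := Real.exp_lt_exp.2 hlog
    rwa [Real.exp_log (by positivity), Real.exp_log hc2pos] at hexp
  -- assemble
  have hl3 : 3 ≤ 4*t+g := by omega
  have hlt := Fbad_lt m t g hm ht ε ⟨hε0, hε2⟩ h1 h2
  have hPl_lt : listColorFunction (K2l (4*t+g)) m < chromPoly (K2l (4*t+g)) m :=
    lt_of_le_of_lt (Nat.sInf_le ⟨Lbad m t g, Lbad_assign m t g hm, rfl⟩) hlt
  have hSne : (2*(4*t+g)+2) ∈ {k | chromNum (K2l (4*t+g)) ≤ k ∧
      ∀ m', k ≤ m' → listColorFunction (K2l (4*t+g)) m' = chromPoly (K2l (4*t+g)) m'} := by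
    constructor
    · exact le_trans (chromNum_le_two _ (by omega)) (by omega)
    · intro q hq
      exact lcf_eq _ q hl3 hq
  have hmem := Nat.sInf_mem (Set.nonempty_of_mem hSne)
  show m < sInf {k | chromNum (K2l (4*t+g)) ≤ k ∧
      ∀ m', k ≤ m' → listColorFunction (K2l (4*t+g)) m' = chromPoly (K2l (4*t+g)) m'}
  by_contra hcon
  push_neg at hcon
  exact absurd (hmem.2 m hcon) (Nat.ne_of_lt hPl_lt)
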